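/- arXiv:1804.09076 — 3 statements merged into one kernel-verified Lean document; each statement's English description precedes it below -/
import Mathlib

section
/- Let X be a topological space admitting a countable cover {A_i}_{i∈ℕ} by closed subsets such that each A_i, equipped with the subspace topology, is metrizable. If K ⊆ X is a sequentially compact subspace (every sequence in K has a subsequence converging in X to a point of K), then K is compact. -/
open Set Filter Topology

theorem aux_seq_lindelof_compact {X : Type*} [TopologicalSpace X] {K : Set X}
    (hseq : IsSeqCompact K) (hlin : IsLindelof K) : IsCompact K := by
  classical
  rw [isCompact_iff_finite_subcover]
  intro ι U hUo hKU
  obtain ⟨r, hrc, hrsub⟩ := hlin.elim_countable_subcover U hUo hKU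
  rcases r.eq_empty_or_nonempty with rfl | hne
  · refine ⟨∅, ?_⟩
    simpa using hrsub
  obtain ⟨f, rfl⟩ := hrc.exists_eq_range hne
  by_contra h
  push_neg at h
  have hx : ∀ n : ℕ, ∃ x ∈ K, x ∉ ⋃ k ∈ Finset.range (n + 1), U (f k) := by
    intro n
    have := h ((Finset.range (n + 1)).image f)
    obtain ⟨x, hxK, hxn⟩ := Set.not_subset.1 this
    refine ⟨x, hxK, fun hmem => hxn ?_⟩
    simp only [Set.mem_iUnion, Finset.mem_range] at hmem
    obtain ⟨k, hk, hkx⟩ := hmem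
    exact Set.mem_biUnion (Finset.mem_image_of_mem f (Finset.mem_range.2 hk)) hkx
  choose x hxK hxn using hx
  obtain ⟨a, haK, φ, hφ, hconv⟩ := hseq hxK
  have haU : a ∈ ⋃ i ∈ range f, U i := hrsub haK
  simp only [Set.mem_iUnion] at haU
  obtain ⟨i, ⟨m, rfl⟩, hai⟩ := haU
  have hev : ∀ᶠ n in atTop, (x ∘ φ) n ∈ U (f m) :=
    hconv.eventually ((hUo (f m)).mem_nhds hai)
  obtain ⟨n, hn, hmem⟩ := (hev.and (eventually_ge_atTop m)).exists
  exact hxn (φ n) (Set.mem_biUnion (Finset.mem_range.2 (Nat.lt_succ_of_le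
    (hmem.trans (hφ.le_apply)))) hn)

theorem stmt_0 {X : Type*} [TopologicalSpace X] (A : ℕ → Set X)
    (hclosed : ∀ i, IsClosed (A i)) (hcover : (⋃ i, A i) = Set.univ)
    (hmetr : ∀ i, TopologicalSpace.MetrizableSpace (A i))
    (K : Set X) (hK : IsSeqCompact K) : IsCompact K := by
  have hKi : ∀ i, IsCompact (A i ∩ K) := by
    intro i
    haveI := hmetr i
    letI := TopologicalSpace.metrizableSpaceMetric (A i)
    have hseq : IsSeqCompact ((Subtype.val : A i → X) ⁻¹' K) := by
      intro u hu
      obtain ⟨a, haK, φ, hφ, hconv⟩ := hK (x := fun n => (u n : X)) (fun n => hu n)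
      have haA : a ∈ A i :=
        (hclosed i).mem_of_tendsto hconv (Eventually.of_forall fun n => (u (φ n)).2)
      refine ⟨⟨a, haA⟩, haK, φ, hφ, ?_⟩
      rw [IsEmbedding.subtypeVal.tendsto_nhds_iff]
      exact hconv
    have hc : IsCompact (Subtype.val '' ((Subtype.val : A i → X) ⁻¹' K)) :=
      (hseq.isCompact).image continuous_subtype_val
    rwa [Subtype.image_preimage_coe] at hc
  have hcov : K = ⋃ i, A i ∩ K := by
    rw [← Set.iUnion_inter, hcover, Set.univ_inter]
  have hlin : IsLindelof K := by
    rw [hcov]; exact isLindelof_iUnion fun i => (hKi i).isLindelof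
  exact aux_seq_lindelof_compact hK hlin
end

section
/- For every integer n ≥ 1 there is a constant C = C(n) > 0 with the following property: if S ⊆ ℝ^{n+1} is a Borel set and A > 0 satisfy H^n(S ∩ B_r(y)) ≤ A r^n for all y ∈ ℝ^{n+1} and all r > 0, then λ[S] ≤ C · A. -/
open MeasureTheory Metric Set
open scoped ENNReal

noncomputable section

/-- The Gaussian surface area `F[S] = (4π)^{-n/2} ∫_S e^{-|x|²/4} dH^n` of a set
`S ⊆ ℝ^{n+1}`, valued in `[0, ∞]`. -/
def gaussianArea (n : ℕ) (S : Set (EuclideanSpace ℝ (Fin (n + 1)))) : ℝ≥0∞ :=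
  ENNReal.ofReal ((4 * Real.pi) ^ (-(n : ℝ) / 2)) *
    ∫⁻ x in S, ENNReal.ofReal (Real.exp (-‖x‖ ^ 2 / 4)) ∂(μH[n])

/-- The Colding–Minicozzi entropy `λ[S] = sup_{ρ>0, y} F[ρS + y]`, valued in `[0, ∞]`. -/
def entropy (n : ℕ) (S : Set (EuclideanSpace ℝ (Fin (n + 1)))) : ℝ≥0∞ :=
  ⨆ (ρ : ℝ) (_ : 0 < ρ) (y : EuclideanSpace ℝ (Fin (n + 1))),
    gaussianArea n ((fun x => ρ • x + y) '' S)

/-- The series `∑ e^{-k²/4} (k+1)^n` converges. -/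
lemma summable_aux (n : ℕ) :
    Summable (fun k : ℕ => Real.exp (-(k : ℝ) ^ 2 / 4) * ((k : ℝ) + 1) ^ n) := by
  set r : ℝ := Real.exp (-4⁻¹) with hr
  have hr0 : 0 < r := Real.exp_pos _
  have hr1 : r < 1 := Real.exp_lt_one_iff.mpr (by norm_num)
  have h1 : Summable (fun k : ℕ => (k : ℝ) ^ n * r ^ k) :=
    summable_pow_mul_geometric_of_norm_lt_one n (by rw [Real.norm_eq_abs, abs_of_pos hr0]; exact hr1)
  have h2 : Summable (fun k : ℕ => ((k : ℝ) + 1) ^ n * r ^ (k + 1)) := by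
    have := (summable_nat_add_iff 1).mpr h1
    simpa [Nat.cast_add, Nat.cast_one] using this
  have h3 : Summable (fun k : ℕ => ((k : ℝ) + 1) ^ n * r ^ k) := by
    have := h2.mul_left r⁻¹
    refine this.congr fun k => ?_
    field_simp [pow_succ]
    ring
  refine h3.of_nonneg_of_le (fun k => by positivity) fun k => ?_
  have hle : Real.exp (-(k : ℝ) ^ 2 / 4) ≤ r ^ k := by
    rw [hr, ← Real.exp_nat_mul]
    apply Real.exp_le_exp.mpr
    have : (k : ℝ) ≤ (k : ℝ) ^ 2 := by
      have := Nat.le_self_pow (two_ne_zero) k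
      exact_mod_cast this
    nlinarith
  have hb : (0:ℝ) ≤ ((k : ℝ) + 1) ^ n := by positivity
  calc Real.exp (-(k : ℝ) ^ 2 / 4) * ((k : ℝ) + 1) ^ n ≤ r ^ k * ((k : ℝ) + 1) ^ n :=
        mul_le_mul_of_nonneg_right hle hb
    _ = ((k : ℝ) + 1) ^ n * r ^ k := mul_comm _ _

/-- The Gaussian-weighted integral of a set with polynomial ball-density bound is controlled by
the series `∑ e^{-k²/4} · A (k+1)^n`, by decomposing space into annuli. -/
lemma integral_bound (n : ℕ) (T : Set (EuclideanSpace ℝ (Fin (n + 1)))) (A : ℝ)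
    (h : ∀ z r, 0 < r → μH[n] (T ∩ ball z r) ≤ ENNReal.ofReal (A * r ^ n)) :
    (∫⁻ x in T, ENNReal.ofReal (Real.exp (-‖x‖ ^ 2 / 4)) ∂(μH[n])) ≤
      ∑' k : ℕ, ENNReal.ofReal (Real.exp (-(k : ℝ) ^ 2 / 4)) *
        ENNReal.ofReal (A * ((k : ℝ) + 1) ^ n) := by
  have hcov : T ⊆ ⋃ k : ℕ, T ∩ (ball (0 : EuclideanSpace ℝ (Fin (n+1))) (k + 1) \ ball 0 k) := by
    intro x hx
    refine Set.mem_iUnion.mpr ⟨⌊‖x‖⌋₊, hx, ?_, ?_⟩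
    · rw [mem_ball_zero_iff]; exact_mod_cast Nat.lt_floor_add_one ‖x‖
    · rw [mem_ball_zero_iff]; push_neg; exact Nat.floor_le (norm_nonneg x)
  calc (∫⁻ x in T, ENNReal.ofReal (Real.exp (-‖x‖ ^ 2 / 4)) ∂(μH[n]))
      ≤ ∫⁻ x in ⋃ k : ℕ, T ∩ (ball (0 : EuclideanSpace ℝ (Fin (n+1))) (k + 1) \ ball 0 k),
          ENNReal.ofReal (Real.exp (-‖x‖ ^ 2 / 4)) ∂(μH[n]) := lintegral_mono_set hcov
    _ ≤ ∑' k : ℕ, ∫⁻ x in T ∩ (ball (0 : EuclideanSpace ℝ (Fin (n+1))) (k + 1) \ ball 0 k),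
          ENNReal.ofReal (Real.exp (-‖x‖ ^ 2 / 4)) ∂(μH[n]) := lintegral_iUnion_le _ _
    _ ≤ _ := by
        refine ENNReal.tsum_le_tsum fun k => ?_
        have step1 : (∫⁻ x in T ∩ (ball (0 : EuclideanSpace ℝ (Fin (n+1))) (k + 1) \ ball 0 k),
              ENNReal.ofReal (Real.exp (-‖x‖ ^ 2 / 4)) ∂(μH[n])) ≤
            ENNReal.ofReal (Real.exp (-(k : ℝ) ^ 2 / 4)) *
              μH[n] (T ∩ (ball (0 : EuclideanSpace ℝ (Fin (n+1))) (k + 1) \ ball 0 k)) := by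
          rw [← setLIntegral_const]
          refine setLIntegral_mono measurable_const fun x hx => ?_
          have hk : (k : ℝ) ≤ ‖x‖ := by
            have := hx.2.2
            rw [mem_ball_zero_iff] at this; linarith [not_lt.mp this]
          refine ENNReal.ofReal_le_ofReal (Real.exp_le_exp.mpr ?_)
          have : (k : ℝ) ^ 2 ≤ ‖x‖ ^ 2 := by nlinarith [norm_nonneg x]
          linarith
        refine step1.trans ?_
        refine mul_le_mul_right ?_ _
        refine le_trans (measure_mono ?_) (h 0 ((k : ℝ) + 1) (by positivity))
        exact Set.inter_subset_inter_right _ fun x hx => hx.1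

/-- The polynomial ball-density bound is invariant under scaling and translation. -/
lemma scaled_density (n : ℕ) (S : Set (EuclideanSpace ℝ (Fin (n + 1)))) (A : ℝ)
    (h : ∀ (y : EuclideanSpace ℝ (Fin (n + 1))) (r : ℝ), 0 < r →
      μH[n] (S ∩ ball y r) ≤ ENNReal.ofReal (A * r ^ n))
    (ρ : ℝ) (hρ : 0 < ρ) (y : EuclideanSpace ℝ (Fin (n + 1))) :
    ∀ (z : EuclideanSpace ℝ (Fin (n + 1))) (r : ℝ), 0 < r →
      μH[n] ((fun x => ρ • x + y) '' S ∩ ball z r) ≤ ENNReal.ofReal (A * r ^ n) := by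
  intro z r hr
  set φ : EuclideanSpace ℝ (Fin (n + 1)) → EuclideanSpace ℝ (Fin (n + 1)) := fun x => ρ • x + y
  have hL : LipschitzWith ρ.toNNReal φ := by
    refine LipschitzWith.of_dist_le_mul fun a b => ?_
    have : dist (φ a) (φ b) = dist (ρ • a) (ρ • b) := dist_add_right _ _ _
    rw [this, dist_smul₀, Real.norm_eq_abs, abs_of_pos hρ, Real.coe_toNNReal _ hρ.le]
  have hsub : φ '' S ∩ ball z r ⊆ φ '' (S ∩ ball (ρ⁻¹ • (z - y)) (r / ρ)) := by
    rintro w ⟨⟨x, hxS, rfl⟩, hw⟩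
    refine ⟨x, ⟨hxS, ?_⟩, rfl⟩
    rw [mem_ball] at hw ⊢
    have : dist x (ρ⁻¹ • (z - y)) = ρ⁻¹ * dist (φ x) z := by
      have h1 : dist (φ x) z = dist (ρ • x) (z - y) := by
        simp only [φ]; rw [dist_eq_norm, dist_eq_norm]; congr 1; abel
      have h2 : x = ρ⁻¹ • (ρ • x) := by
        rw [smul_smul, inv_mul_cancel₀ hρ.ne', one_smul]
      rw [h1]
      conv_lhs => rw [h2]
      rw [dist_smul₀, Real.norm_eq_abs, abs_of_pos (inv_pos.mpr hρ)]
    rw [this, div_eq_inv_mul]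
    exact mul_lt_mul_of_pos_left hw (inv_pos.mpr hρ)
  calc μH[n] (φ '' S ∩ ball z r) ≤ μH[n] (φ '' (S ∩ ball (ρ⁻¹ • (z - y)) (r / ρ))) :=
        measure_mono hsub
    _ ≤ (ρ.toNNReal : ℝ≥0∞) ^ (n : ℝ) * μH[n] (S ∩ ball (ρ⁻¹ • (z - y)) (r / ρ)) :=
        hL.hausdorffMeasure_image_le (by positivity) _
    _ ≤ ENNReal.ofReal (ρ ^ n) * ENNReal.ofReal (A * (r / ρ) ^ n) := by
        refine mul_le_mul' ?_ (h _ _ (by positivity))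
        rw [ENNReal.rpow_natCast, ENNReal.ofReal_pow hρ.le, ENNReal.ofReal]
    _ = ENNReal.ofReal (A * r ^ n) := by
        rw [← ENNReal.ofReal_mul (by positivity)]
        congr 1
        rw [div_pow]
        field_simp

theorem stmt_5 (n : ℕ) (hn : 1 ≤ n) :
    ∃ C : ℝ, 0 < C ∧ ∀ S : Set (EuclideanSpace ℝ (Fin (n + 1))), MeasurableSet S →
      ∀ A : ℝ, 0 < A →
      (∀ (y : EuclideanSpace ℝ (Fin (n + 1))) (r : ℝ), 0 < r →
        μH[n] (S ∩ ball y r) ≤ ENNReal.ofReal (A * r ^ n)) →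
      entropy n S ≤ ENNReal.ofReal (C * A) := by
  set c0 : ℝ := (4 * Real.pi) ^ (-(n : ℝ) / 2) with hc0
  have hc0pos : 0 < c0 := Real.rpow_pos_of_pos (by positivity) _
  set a : ℕ → ℝ := fun k => Real.exp (-(k : ℝ) ^ 2 / 4) * ((k : ℝ) + 1) ^ n with ha
  have hs : Summable a := summable_aux n
  set Sa : ℝ := ∑' k, a k with hSa
  have hSapos : 0 < Sa := by
    have h0 : (0:ℝ) < a 0 := by
      simp only [ha]
      positivity
    exact h0.trans_le (Summable.le_tsum hs 0 fun i _ => by positivity)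
  refine ⟨c0 * Sa, mul_pos hc0pos hSapos, fun S _ A hA hd => ?_⟩
  rw [entropy]
  refine iSup_le fun ρ => iSup_le fun hρ => iSup_le fun y => ?_
  rw [gaussianArea]
  have key := integral_bound n ((fun x => ρ • x + y) '' S) A (scaled_density n S A hd ρ hρ y)
  refine le_trans (mul_le_mul_right key _) ?_
  have heq : ∀ k : ℕ, ENNReal.ofReal (Real.exp (-(k : ℝ) ^ 2 / 4)) *
      ENNReal.ofReal (A * ((k : ℝ) + 1) ^ n) = ENNReal.ofReal (A * a k) := by
    intro k
    rw [← ENNReal.ofReal_mul (Real.exp_nonneg _)]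
    congr 1
    simp only [ha]
    ring
  calc ENNReal.ofReal c0 * ∑' k : ℕ, ENNReal.ofReal (Real.exp (-(k : ℝ) ^ 2 / 4)) *
          ENNReal.ofReal (A * ((k : ℝ) + 1) ^ n)
      = ENNReal.ofReal c0 * ∑' k : ℕ, ENNReal.ofReal (A * a k) := by
        congr 1
        exact tsum_congr heq
    _ = ENNReal.ofReal c0 * ENNReal.ofReal (∑' k : ℕ, A * a k) := by
        rw [ENNReal.ofReal_tsum_of_nonneg (fun k => by positivity) (hs.mul_left A)]
    _ = ENNReal.ofReal (c0 * Sa * A) := by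
        rw [tsum_mul_left, ← ENNReal.ofReal_mul hc0pos.le, ← hSa]
        ring_nf
    _ ≤ ENNReal.ofReal (c0 * Sa * A) := le_rfl

end
end

section
/- Let X be a Hausdorff topological space and Y a connected, locally compact, Hausdorff topological space. Let f : X → Y be a surjective continuous map that is a local homeomorphism (every point of X has an open neighborhood mapped by f homeomorphically onto an open subset of Y) and proper (f⁻¹(K) is compact for every compact K ⊆ Y). Then f is a covering map; moreover, every fiber f⁻¹({y}) is finite, and the cardinality of the fiber f⁻¹({y}) is the same for all y ∈ Y. -/
open Set Topology

/-- In a T2 space, finitely many distinct points admit pairwise disjoint open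
neighborhoods. -/
lemma my_exists_disjoint_opens {X : Type*} [TopologicalSpace X] [T2Space X] {ι : Type*}
    [Finite ι] (x : ι → X) (hinj : Function.Injective x) :
    ∃ U : ι → Set X, (∀ i, IsOpen (U i)) ∧ (∀ i, x i ∈ U i) ∧ Pairwise (Function.onFun Disjoint U) := by
  have h : ∀ i j : ι, ∃ A : Set X × Set X, IsOpen A.1 ∧ IsOpen A.2 ∧ x i ∈ A.1 ∧ x j ∈ A.2 ∧
      (i ≠ j → Disjoint A.1 A.2) := by
    intro i j
    by_cases hij : i = j
    · exact ⟨(univ, univ), isOpen_univ, isOpen_univ, trivial, trivial,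
        fun h => absurd hij h⟩
    · obtain ⟨A, B, hA, hB, hxA, hxB, hAB⟩ := t2_separation (fun h => hij (hinj h))
      exact ⟨(A, B), hA, hB, hxA, hxB, fun _ => hAB⟩
  choose P hA hB hxA hxB hAB using h
  refine ⟨fun i => (⋂ j, (P i j).1) ∩ ⋂ j, (P j i).2,
    fun i => ((isOpen_iInter_of_finite fun j => hA i j).inter
      (isOpen_iInter_of_finite fun j => hB j i)),
    fun i => ⟨mem_iInter.2 fun j => hxA i j, mem_iInter.2 fun j => hxB j i⟩, ?_⟩
  intro i j hij
  exact (hAB i j hij).mono (fun z hz => mem_iInter.1 hz.1 j) (fun z hz => mem_iInter.1 hz.2 i)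

/-- Fibers of a local homeomorphism are discrete. -/
lemma my_fiber_discrete {X Y : Type*} [TopologicalSpace X] [TopologicalSpace Y] {f : X → Y}
    (hloc : IsLocalHomeomorph f) (y : Y) : DiscreteTopology (f ⁻¹' {y} : Set X) := by
  rw [discreteTopology_iff_isOpen_singleton]
  rintro ⟨x, hx⟩
  obtain ⟨e, hxe, hfe⟩ := hloc x
  have hset : ({⟨x, hx⟩} : Set (f ⁻¹' {y})) = Subtype.val ⁻¹' e.source := by
    ext ⟨z, hz⟩
    simp only [Set.mem_singleton_iff, Set.mem_preimage, Subtype.mk_eq_mk]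
    constructor
    · rintro rfl; exact hxe
    · intro hze
      refine e.injOn hze hxe ?_
      have hz' : f z = y := hz
      have hx' : f x = y := hx
      rw [← hfe, hz', hx']
  rw [hset]
  exact e.open_source.preimage continuous_subtype_val

theorem stmt_13 {X Y : Type*} [TopologicalSpace X] [TopologicalSpace Y]
    [T2Space X] [T2Space Y] [ConnectedSpace Y] [LocallyCompactSpace Y]
    (f : X → Y) (hf : Continuous f) (hsurj : Function.Surjective f)
    (hloc : IsLocalHomeomorph f)
    (hproper : ∀ K : Set Y, IsCompact K → IsCompact (f ⁻¹' K)) :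
    IsCoveringMap f ∧ (∀ y : Y, (f ⁻¹' {y}).Finite) ∧
      ∀ y₁ y₂ : Y, Nat.card (f ⁻¹' {y₁}) = Nat.card (f ⁻¹' {y₂}) := by
  classical
  have hdisc : ∀ y : Y, DiscreteTopology (f ⁻¹' {y} : Set X) := fun y => my_fiber_discrete hloc y
  have hfin : ∀ y : Y, (f ⁻¹' {y}).Finite := fun y =>
    (hproper {y} isCompact_singleton).finite (isDiscrete_iff_discreteTopology.mpr (hdisc y))
  have hprop : IsProperMap f := isProperMap_iff_isCompact_preimage.2
    ⟨hf, fun K hK => hproper K hK⟩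
  have hclosed : IsClosedMap f := hprop.isClosedMap
  have hopen : IsOpenMap f := hloc.isOpenMap
  have hcov : IsCoveringMap f := by
    intro y
    haveI := hdisc y
    set F : Set X := f ⁻¹' {y} with hFdef
    haveI : Finite F := (hfin y).to_subtype
    haveI hne : Nonempty F := ⟨⟨(hsurj y).choose, (hsurj y).choose_spec⟩⟩
    choose e he hfe using fun i : F => hloc i.val
    obtain ⟨W, hWopen, hWmem, hWdisj⟩ :=
      my_exists_disjoint_opens (fun i : F => (i : X)) Subtype.val_injective
    set U : F → Set X := fun i => W i ∩ (e i).source with hUdef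
    have hUopen : ∀ i, IsOpen (U i) := fun i => (hWopen i).inter (e i).open_source
    have hUmem : ∀ i, (i : X) ∈ U i := fun i => ⟨hWmem i, he i⟩
    have hUsub : ∀ i, U i ⊆ (e i).source := fun i => Set.inter_subset_right
    have hUdisj : Pairwise (Function.onFun Disjoint U) := fun i j hij =>
      (hWdisj hij).mono Set.inter_subset_left Set.inter_subset_left
    set V : Set Y := (⋂ i, f '' U i) \ f '' (⋃ i, U i)ᶜ with hVdef
    have hVopen : IsOpen V :=
      (isOpen_iInter_of_finite fun i => hopen _ (hUopen i)).sdiff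
        (hclosed _ (isOpen_iUnion hUopen).isClosed_compl)
    have hyV : y ∈ V := by
      constructor
      · exact mem_iInter.2 fun i => ⟨i, hUmem i, i.2⟩
      · rintro ⟨z, hz, hfz⟩
        exact hz (mem_iUnion.2 ⟨⟨z, hfz⟩, hUmem ⟨z, hfz⟩⟩)
    have hVim : ∀ v ∈ V, ∀ i, v ∈ f '' U i := fun v hv i => mem_iInter.1 hv.1 i
    have hsymm : ∀ (i : F), ∀ v ∈ V, (e i).symm v ∈ U i ∧ f ((e i).symm v) = v := by
      intro i v hv
      obtain ⟨z, hzU, hzv⟩ := hVim v hv i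
      have hz' : e i z = v := by rw [← hfe i]; exact hzv
      have : (e i).symm v = z := by rw [← hz']; exact (e i).left_inv (hUsub i hzU)
      rw [this]; exact ⟨hzU, hzv⟩
    have hVtarget : ∀ (i : F), ∀ v ∈ V, v ∈ (e i).target := by
      intro i v hv
      obtain ⟨z, hzU, hzv⟩ := hVim v hv i
      have : e i z = v := by rw [← hfe i]; exact hzv
      rw [← this]; exact (e i).map_source (hUsub i hzU)
    have hpre : f ⁻¹' V ⊆ ⋃ i, U i := by
      intro z hz
      by_contra hzU
      exact hz.2 ⟨z, hzU, rfl⟩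
    have hex : ∀ z ∈ f ⁻¹' V, ∃ i, z ∈ U i := fun z hz => mem_iUnion.1 (hpre hz)
    set idx : X → F := fun z => if h : ∃ i, z ∈ U i then h.choose else Classical.arbitrary F
      with hidxdef
    have hidx : ∀ (i : F) (z : X), z ∈ U i → idx z = i := by
      intro i z hz
      have h : ∃ j, z ∈ U j := ⟨i, hz⟩
      simp only [hidxdef, dif_pos h]
      by_contra hne'
      exact Set.disjoint_left.1 (hUdisj hne') h.choose_spec hz
    suffices h : ∃ t : Bundle.Trivialization F f, y ∈ t.baseSet from
      let ⟨_, ht⟩ := h; IsEvenlyCovered.of_trivialization ht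
    refine ⟨{ toFun := fun z => (f z, idx z)
              invFun := fun p => (e p.2).symm p.1
              source := f ⁻¹' V
              target := V ×ˢ Set.univ
              map_source' := fun z hz => ⟨hz, Set.mem_univ _⟩
              map_target' := fun p hp => by
                show f _ ∈ V
                rw [(hsymm p.2 p.1 hp.1).2]; exact hp.1
              left_inv' := fun z hz => by
                obtain ⟨i, hi⟩ := hex z hz
                show (e (idx z)).symm (f z) = z
                rw [hidx i z hi]
                have : f z = e i z := by rw [hfe i]
                rw [this]
                exact (e i).left_inv (hUsub i hi)
              right_inv' := fun p hp => by
                obtain ⟨h1, h2⟩ := hsymm p.2 p.1 hp.1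
                have : idx ((e p.2).symm p.1) = p.2 := hidx p.2 _ h1
                show (f ((e p.2).symm p.1), idx ((e p.2).symm p.1)) = p
                rw [h2, this]
              open_source := hVopen.preimage hf
              open_target := hVopen.prod isOpen_univ
              continuousOn_toFun := by
                refine continuousOn_of_forall_continuousAt fun z hz => ?_
                obtain ⟨i, hi⟩ := hex z hz
                have hev : (fun w => ((f w : Y), idx w)) =ᶠ[nhds z] fun w => (f w, i) := by
                  filter_upwards [(hUopen i).mem_nhds hi] with w hw
                  rw [hidx i w hw]
                exact (hf.continuousAt.prodMk continuousAt_const).congr hev.symm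
              continuousOn_invFun := by
                refine continuousOn_of_forall_continuousAt fun p hp => ?_
                have hsnd : {q : Y × F | q.2 = p.2} ∈ nhds p := by
                  have : IsOpen {q : Y × F | q.2 = p.2} :=
                    (isOpen_discrete ({p.2} : Set F)).preimage continuous_snd
                  exact this.mem_nhds rfl
                have hev : (fun q : Y × F => (e q.2).symm q.1) =ᶠ[nhds p]
                    fun q => (e p.2).symm q.1 := by
                  filter_upwards [hsnd] with q hq
                  rw [hq]
                refine ContinuousAt.congr ?_ hev.symm
                exact ((e p.2).continuousAt_symm (hVtarget p.2 p.1 hp.1)).comp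
                  continuous_fst.continuousAt
              baseSet := V
              open_baseSet := hVopen
              source_eq := rfl
              target_eq := rfl
              proj_toFun := fun z _ => rfl }, hyV⟩
  refine ⟨hcov, hfin, ?_⟩
  have hlc : IsLocallyConstant (fun y : Y => Nat.card (f ⁻¹' {y})) := by
    rw [IsLocallyConstant.iff_exists_open]
    intro y
    haveI : Nonempty (f ⁻¹' {y}) := ⟨⟨(hsurj y).choose, (hsurj y).choose_spec⟩⟩
    set t := (hcov y).toTrivialization with ht
    refine ⟨t.baseSet, t.open_baseSet, (hcov y).mem_toTrivialization_baseSet, fun y' hy' => ?_⟩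
    exact Nat.card_congr (t.preimageSingletonHomeomorph hy').toEquiv
  intro y₁ y₂
  exact hlc.apply_eq_of_preconnectedSpace y₁ y₂
end
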